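/- Let A be a finite abelian group with no elements of order p, and let E be an elementary abelian p-group of order p² acting on A by automorphisms. Then A is generated by the fixed-point subgroups C_A(E₀) as E₀ ranges over the subgroups of E of order p (equivalently of index p). -/

import Mathlib

/-- Let `A` be a finite abelian group with no elements of order `p`, and let `E` be an
elementary abelian `p`-group of order `p ^ 2` acting on `A` by automorphisms. Then `A`
is generated by the fixed-point subgroups `C_A(E₀)` as `E₀` ranges over the subgroups
of `E` of order `p`. -/
theorem stmt_8 (p : ℕ) (hp : p.Prime) (A : Type*) [AddCommGroup A] [Finite A]
    (htf : ∀ a : A, p • a = 0 → a = 0)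
    (E : Type*) [Group E]
    (hE : Nonempty (E ≃* (Multiplicative (ZMod p) × Multiplicative (ZMod p))))
    [DistribMulAction E A] :
    AddSubgroup.closure
      {a : A | ∃ E₀ : Subgroup E, Nat.card E₀ = p ∧ ∀ x ∈ E₀, x • a = a} = ⊤ := by
  classical
  obtain ⟨e⟩ := hE
  haveI : NeZero p := ⟨hp.ne_zero⟩
  haveI : Finite E := Finite.of_equiv _ e.symm.toEquiv
  haveI : Fintype E := Fintype.ofFinite E
  haveI : Fintype (Subgroup E) := Fintype.ofFinite _
  set S : Set A := {a : A | ∃ E₀ : Subgroup E, Nat.card E₀ = p ∧ ∀ x ∈ E₀, x • a = a} with hS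
  -- every element has x ^ p = 1
  have hz : ∀ y : Multiplicative (ZMod p), y ^ p = 1 := by
    intro y
    have h1 : (y ^ p).toAdd = (1 : Multiplicative (ZMod p)).toAdd := by
      rw [toAdd_pow, toAdd_one, nsmul_eq_mul, ZMod.natCast_self, zero_mul]
    exact Multiplicative.toAdd.injective h1
  have hxp : ∀ x : E, x ^ p = 1 := by
    intro x
    apply e.injective
    rw [map_pow, map_one]
    exact Prod.ext (by rw [Prod.pow_fst]; exact hz _) (by rw [Prod.pow_snd]; exact hz _)
  have hcardE : Nat.card E = p * p := by
    rw [Nat.card_congr e.toEquiv, Nat.card_prod]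
    have : Nat.card (Multiplicative (ZMod p)) = p := by
      rw [Nat.card_congr Multiplicative.toAdd, Nat.card_zmod]
    rw [this]
  have horder : ∀ x : E, x ≠ 1 → orderOf x = p := by
    intro x hx
    rcases hp.eq_one_or_self_of_dvd _ (orderOf_dvd_of_pow_eq_one (hxp x)) with h | h
    · exact absurd (orderOf_eq_one_iff.mp h) hx
    · exact h
  have hzcard : ∀ x : E, x ≠ 1 → Nat.card (Subgroup.zpowers x) = p := fun x hx => by
    rw [Nat.card_zpowers, horder x hx]
  -- key membership lemma
  have L : ∀ (x : E), x ≠ 1 → ∀ H : Subgroup E, Nat.card H = p →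
      (x ∈ H ↔ H = Subgroup.zpowers x) := by
    intro x hx H hH
    constructor
    · intro hxH
      exact (Subgroup.eq_of_le_of_card_ge (Subgroup.zpowers_le.mpr hxH)
        (by rw [hH, hzcard x hx])).symm
    · intro h; rw [h]; exact Subgroup.mem_zpowers x
  set 𝒮 : Finset (Subgroup E) := Finset.univ.filter (fun H => Nat.card H = p) with h𝒮
  set t : Subgroup E → A → A := fun H a => ∑ x ∈ Finset.univ.filter (· ∈ H), x • a with ht
  set s : A → A := fun a => ∑ x : E, x • a with hs
  -- t H a is fixed by H
  have htfix : ∀ (H : Subgroup E) (a : A), ∀ y ∈ H, y • t H a = t H a := by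
    intro H a y hy
    rw [ht]
    simp only
    rw [Finset.smul_sum]
    refine Finset.sum_nbij' (fun x => y * x) (fun x => y⁻¹ * x) ?_ ?_ ?_ ?_ ?_
    · intro x hx
      simp only [Finset.mem_filter, Finset.mem_univ, true_and] at hx ⊢
      exact H.mul_mem hy hx
    · intro x hx
      simp only [Finset.mem_filter, Finset.mem_univ, true_and] at hx ⊢
      exact H.mul_mem (H.inv_mem hy) hx
    · intro x _; simp
    · intro x _; simp
    · intro x _; simp [mul_smul]
  have hsfix : ∀ (a : A), ∀ y : E, y • s a = s a := by
    intro a y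
    rw [hs]
    simp only
    rw [Finset.smul_sum]
    refine Finset.sum_nbij' (fun x => y * x) (fun x => y⁻¹ * x) ?_ ?_ ?_ ?_ ?_
    · intro x _; exact Finset.mem_univ _
    · intro x _; exact Finset.mem_univ _
    · intro x _; simp
    · intro x _; simp
    · intro x _; simp [mul_smul]
  -- a nontrivial element exists
  have hnt : Nontrivial E := by
    rw [← Finite.one_lt_card_iff_nontrivial, hcardE]
    nlinarith [hp.two_le]
  obtain ⟨x₀, hx₀⟩ := exists_ne (1 : E)
  have hzp𝒮 : ∀ x : E, x ≠ 1 → Subgroup.zpowers x ∈ 𝒮 := by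
    intro x hx
    rw [h𝒮, Finset.mem_filter]
    exact ⟨Finset.mem_univ _, hzcard x hx⟩
  have htS : ∀ H ∈ 𝒮, ∀ a : A, t H a ∈ S := by
    intro H hH a
    rw [h𝒮, Finset.mem_filter] at hH
    exact ⟨H, hH.2, fun y hy => htfix H a y hy⟩
  have hsS : ∀ a : A, s a ∈ S :=
    fun a => ⟨Subgroup.zpowers x₀, hzcard x₀ hx₀, fun y _ => hsfix a y⟩
  -- counting : 𝒮.card = p + 1
  have hfcard : ∀ H : Subgroup E, (Finset.univ.filter (· ∈ H)).card = Nat.card H := by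
    intro H
    rw [Nat.card_eq_fintype_card, Fintype.card_subtype]
  have hm : 𝒮.card = p + 1 := by
    set T : Finset E := Finset.univ.filter (fun x => x ≠ 1) with hT
    have hTcard : T.card = p * p - 1 := by
      rw [hT, Finset.filter_ne', Finset.card_erase_of_mem (Finset.mem_univ _),
        Finset.card_univ, ← Nat.card_eq_fintype_card, hcardE]
    have hcount : T.card = ∑ H ∈ 𝒮, (T.filter (fun x => Subgroup.zpowers x = H)).card := by
      refine Finset.card_eq_sum_card_fiberwise ?_
      intro x hx
      rw [hT, Finset.mem_coe, Finset.mem_filter] at hx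
      exact hzp𝒮 x hx.2
    have hfiber : ∀ H ∈ 𝒮, (T.filter (fun x => Subgroup.zpowers x = H)).card = p - 1 := by
      intro H hH
      rw [h𝒮, Finset.mem_filter] at hH
      have : T.filter (fun x => Subgroup.zpowers x = H)
          = (Finset.univ.filter (· ∈ H)).erase 1 := by
        ext x
        rw [Finset.mem_filter, hT, Finset.mem_filter, Finset.mem_erase, Finset.mem_filter]
        constructor
        · rintro ⟨⟨-, hx1⟩, hx2⟩
          exact ⟨hx1, Finset.mem_univ _, (L x hx1 H hH.2).mpr hx2.symm⟩
        · rintro ⟨hx1, -, hx2⟩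
          exact ⟨⟨Finset.mem_univ _, hx1⟩, ((L x hx1 H hH.2).mp hx2).symm⟩
      rw [this, Finset.card_erase_of_mem, hfcard, hH.2]
      rw [Finset.mem_filter]
      exact ⟨Finset.mem_univ _, H.one_mem⟩
    rw [Finset.sum_congr rfl hfiber, Finset.sum_const, smul_eq_mul, hTcard] at hcount
    have h2 := hp.two_le
    have hkey : (p + 1) * (p - 1) = p * p - 1 := by
      obtain ⟨q, rfl⟩ := Nat.exists_eq_add_of_le h2
      have h3 : 2 + q - 1 = q + 1 := by omega
      rw [h3]
      ring_nf
      omega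
    have := hcount.symm.trans hkey.symm
    exact Nat.eq_of_mul_eq_mul_right (by omega) this
  -- the key identity: ∑ H ∈ 𝒮, t H a = s a + p • a
  have key : ∀ a : A, ∑ H ∈ 𝒮, t H a = s a + p • a := by
    intro a
    have h1 : ∀ H ∈ 𝒮, t H a = ∑ x : E, (if x ∈ H then x • a else 0) := by
      intro H _
      rw [ht]
      simp only
      rw [Finset.sum_filter]
    rw [Finset.sum_congr rfl h1, Finset.sum_comm]
    have h2 : ∀ x : E, (∑ H ∈ 𝒮, if x ∈ H then x • a else 0)
        = (𝒮.filter (x ∈ ·)).card • (x • a) := by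
      intro x
      rw [← Finset.sum_filter, Finset.sum_const]
    rw [Finset.sum_congr rfl (fun x _ => h2 x)]
    have h3 : ∀ x : E, x ≠ 1 → (𝒮.filter (x ∈ ·)).card = 1 := by
      intro x hx
      have : 𝒮.filter (x ∈ ·) = {Subgroup.zpowers x} := by
        ext H
        rw [Finset.mem_filter, Finset.mem_singleton, h𝒮, Finset.mem_filter]
        constructor
        · rintro ⟨⟨-, hH⟩, hxH⟩
          exact (L x hx H hH).mp hxH
        · rintro rfl
          exact ⟨⟨Finset.mem_univ _, hzcard x hx⟩, Subgroup.mem_zpowers x⟩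
      rw [this, Finset.card_singleton]
    have h4 : (𝒮.filter ((1 : E) ∈ ·)).card = p + 1 := by
      rw [Finset.filter_true_of_mem (fun H _ => H.one_mem), hm]
    rw [← Finset.add_sum_erase _ _ (Finset.mem_univ (1 : E)), h4, one_smul]
    have h5 : ∀ x ∈ Finset.univ.erase (1 : E),
        (𝒮.filter (x ∈ ·)).card • (x • a) = x • a := by
      intro x hx
      rw [h3 x (Finset.mem_erase.mp hx).1, one_smul]
    rw [Finset.sum_congr rfl h5, hs]
    simp only
    rw [← Finset.add_sum_erase _ _ (Finset.mem_univ (1 : E)), one_smul, succ_nsmul]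
    abel
  -- conclude
  have hsub : ∀ a : A, p • a ∈ AddSubgroup.closure S := by
    intro a
    have h1 : p • a = (∑ H ∈ 𝒮, t H a) - s a := by rw [key a]; abel
    rw [h1]
    refine AddSubgroup.sub_mem _ ?_ (AddSubgroup.subset_closure (hsS a))
    exact AddSubgroup.sum_mem _ (fun H hH => AddSubgroup.subset_closure (htS H hH a))
  have hsurj : Function.Surjective (fun a : A => p • a) := by
    apply Finite.surjective_of_injective
    intro a b h
    simp only at h
    have : p • (a - b) = 0 := by rw [smul_sub, h, sub_self]
    exact sub_eq_zero.mp (htf _ this)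
  rw [eq_top_iff]
  intro a _
  obtain ⟨b, hb⟩ := hsurj a
  simp only at hb
  rw [← hb]
  exact hsub b
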